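/- The function u_R : A × Θ → ℝ defined by u_R(a, θ) := max_{D ∈ S(a,θ)} u(D, a, θ) is upper semicontinuous on A × Θ, where A carries the supremum-norm topology. (For every a ∈ A and θ ∈ Θ the set S(a, θ) is nonempty and compact, so the maximum is attained.) -/
import Mathlib


open Set

/-- Convex combinations of points of `[θl, θu]` stay in `[θl, θu]`. -/
theorem comb_mem_Icc {θl θu : ℝ} (x y : Set.Icc θl θu) {t : ℝ} (h0 : 0 ≤ t) (h1 : t ≤ 1) :
    t * (x : ℝ) + (1 - t) * (y : ℝ) ∈ Set.Icc θl θu := by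
  constructor
  · nlinarith [x.2.1, y.2.1]
  · nlinarith [x.2.2, y.2.2]

/-- A continuous function on `[θl, θu]` is convex. -/
def IsConvexMap {θl θu : ℝ} (a : C(Set.Icc θl θu, ℝ)) : Prop :=
  ∀ (x y : Set.Icc θl θu) (t : ℝ) (h0 : 0 ≤ t) (h1 : t ≤ 1),
    a ⟨t * (x : ℝ) + (1 - t) * (y : ℝ), comb_mem_Icc x y h0 h1⟩ ≤ t * a x + (1 - t) * a y

/-- The set `A` of indirect utilities: continuous functions on `Θ = [θl, θu]` that take the
value `c0` at `θl`, and are decreasing, convex, and `D0`-Lipschitz. -/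
def indirectUtilities (θl θu : ℝ) (h : θl ≤ θu) (c0 D0 : ℝ) :
    Set C(Set.Icc θl θu, ℝ) :=
  {a | a ⟨θl, Set.left_mem_Icc.mpr h⟩ = c0 ∧ Antitone a ∧ IsConvexMap a ∧
    LipschitzWith (Real.toNNReal D0) a}

/-- The subgradient-feasible set `S(a, θ) = {D ∈ [0, D0] : a(θ') ≥ a(θ) − D(θ' − θ) ∀ θ'}`. -/
def subgradientSet {θl θu : ℝ} (D0 : ℝ) (a : C(Set.Icc θl θu, ℝ))
    (θ : Set.Icc θl θu) : Set ℝ :=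
  {D | D ∈ Set.Icc (0 : ℝ) D0 ∧
    ∀ θ' : Set.Icc θl θu, a θ - D * ((θ' : ℝ) - (θ : ℝ)) ≤ a θ'}

/-- The insurer's payoff `u(D, a, θ)`. -/
def insurerPayoff (wbar ℓ : ℝ) (g : ℝ → ℝ) {θl θu : ℝ} (D : ℝ)
    (a : C(Set.Icc θl θu, ℝ)) (θ : Set.Icc θl θu) : ℝ :=
  wbar - (θ : ℝ) * ℓ - (1 - (θ : ℝ)) * g (a θ + (θ : ℝ) * D) -
    (θ : ℝ) * g (a θ - (1 - (θ : ℝ)) * D)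

/-- The insurer's reduced payoff `u_R(a, θ) = max_{D ∈ S(a, θ)} u(D, a, θ)`. -/
noncomputable def insurerReducedPayoff (wbar ℓ : ℝ) (g : ℝ → ℝ) (D0 : ℝ) {θl θu : ℝ}
    (a : C(Set.Icc θl θu, ℝ)) (θ : Set.Icc θl θu) : ℝ :=
  sSup ((fun D => insurerPayoff wbar ℓ g D a θ) '' subgradientSet D0 a θ)

section Helpers
variable {θl θu : ℝ}

/-- Three-chord inequality from convexity. -/
lemma chord_ineq (a : C(Icc θl θu, ℝ)) (hC : IsConvexMap a) (x y z : Icc θl θu)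
    (hxy : (x:ℝ) ≤ y) (hyz : (y:ℝ) ≤ z) :
    a y * ((z:ℝ) - x) ≤ a x * ((z:ℝ) - y) + a z * ((y:ℝ) - x) := by
  rcases eq_or_lt_of_le (hxy.trans hyz) with hxz | hxz
  · have e1 : (z:ℝ) - x = 0 := by linarith
    have e2 : (z:ℝ) - y = 0 := by linarith
    have e3 : (y:ℝ) - x = 0 := by linarith
    rw [e1, e2, e3]; simp
  · set t : ℝ := ((z:ℝ) - y)/((z:ℝ) - x) with ht_def
    have hzx : (0:ℝ) < (z:ℝ) - x := by linarith
    have h0 : 0 ≤ t := div_nonneg (by linarith) hzx.le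
    have h1 : t ≤ 1 := div_le_one_of_le₀ (by linarith) hzx.le
    have ht : t * ((z:ℝ) - x) = (z:ℝ) - y := div_mul_cancel₀ _ (ne_of_gt hzx)
    have hyeq : t * (x:ℝ) + (1 - t) * (z:ℝ) = y := by nlinarith [ht]
    have key := hC x z t h0 h1
    have heq : (⟨t * (x:ℝ) + (1 - t) * (z:ℝ), comb_mem_Icc x z h0 h1⟩ : Icc θl θu) = y :=
      Subtype.ext hyeq
    rw [heq] at key
    have h2 : a y * ((z:ℝ) - x) ≤ (t * a x + (1 - t) * a z) * ((z:ℝ) - x) :=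
      mul_le_mul_of_nonneg_right key hzx.le
    calc a y * ((z:ℝ) - x) ≤ (t * a x + (1 - t) * a z) * ((z:ℝ) - x) := h2
      _ = a x * ((z:ℝ) - y) + a z * ((y:ℝ) - x) := by
          linear_combination (a x - a z) * ht

end Helpers
/-- Set of right difference quotients (negated), together with `0`. -/
noncomputable def mS {θl θu : ℝ} (a : C(Icc θl θu, ℝ)) (θ : Icc θl θu) : ℝ :=
  sSup (insert 0 ((fun θ'' : Icc θl θu => (a θ - a θ'') / ((θ'':ℝ) - θ)) ''
    {θ'' | (θ:ℝ) < θ''}))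

/-- Set of left difference quotients (negated), together with `D0`. -/
noncomputable def MS {θl θu : ℝ} (D0 : ℝ) (a : C(Icc θl θu, ℝ)) (θ : Icc θl θu) : ℝ :=
  sInf (insert D0 ((fun θ₂ : Icc θl θu => (a θ₂ - a θ) / ((θ:ℝ) - θ₂)) ''
    {θ₂ | (θ₂:ℝ) < θ}))

section Helpers2
variable {θl θu D0 : ℝ} {a : C(Icc θl θu, ℝ)} {θ : Icc θl θu}

lemma lip_abs (hL : LipschitzWith (Real.toNNReal D0) a) (hD0 : 0 ≤ D0) (x y : Icc θl θu) :
    |a x - a y| ≤ D0 * |(x:ℝ) - y| := by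
  have := hL.dist_le_mul x y
  rwa [Real.dist_eq, Subtype.dist_eq, Real.dist_eq, Real.coe_toNNReal _ hD0] at this

lemma rightSlope_nonneg (hA : Antitone a) {θ'' : Icc θl θu} (hlt : (θ:ℝ) < θ'') :
    0 ≤ (a θ - a θ'') / ((θ'':ℝ) - θ) :=
  div_nonneg (by have := hA (le_of_lt (Subtype.coe_lt_coe.mp hlt)); linarith)
    (by linarith)

lemma rightSlope_le_D0 (hL : LipschitzWith (Real.toNNReal D0) a) (hD0 : 0 ≤ D0)
    {θ'' : Icc θl θu} (hlt : (θ:ℝ) < θ'') :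
    (a θ - a θ'') / ((θ'':ℝ) - θ) ≤ D0 := by
  rw [div_le_iff₀ (by linarith)]
  have h1 := (abs_le.mp (lip_abs hL hD0 θ θ'')).2
  have h2 : |(θ:ℝ) - θ''| = (θ'':ℝ) - θ := by rw [abs_sub_comm, abs_of_pos (by linarith)]
  rw [h2] at h1; linarith

lemma leftSlope_nonneg (hA : Antitone a) {θ₂ : Icc θl θu} (hlt : (θ₂:ℝ) < θ) :
    0 ≤ (a θ₂ - a θ) / ((θ:ℝ) - θ₂) :=
  div_nonneg (by have := hA (le_of_lt (Subtype.coe_lt_coe.mp hlt)); linarith)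
    (by linarith)

lemma leftSlope_le_D0 (hL : LipschitzWith (Real.toNNReal D0) a) (hD0 : 0 ≤ D0)
    {θ₂ : Icc θl θu} (hlt : (θ₂:ℝ) < θ) :
    (a θ₂ - a θ) / ((θ:ℝ) - θ₂) ≤ D0 := by
  rw [div_le_iff₀ (by linarith)]
  have h1 := (abs_le.mp (lip_abs hL hD0 θ₂ θ)).2
  have h2 : |(θ₂:ℝ) - θ| = (θ:ℝ) - θ₂ := by rw [abs_sub_comm, abs_of_pos (by linarith)]
  rw [h2] at h1; linarith

/-- right slope ≤ left slope (three chord). -/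
lemma rightSlope_ge_leftSlope (hC : IsConvexMap a) {θ₂ θ'' : Icc θl θu}
    (h2 : (θ₂:ℝ) < θ) (h3 : (θ:ℝ) < θ'') :
    (a θ - a θ'') / ((θ'':ℝ) - θ) ≤ (a θ₂ - a θ) / ((θ:ℝ) - θ₂) := by
  rw [div_le_div_iff₀ (by linarith) (by linarith)]
  have := chord_ineq a hC θ₂ θ θ'' (le_of_lt h2) (le_of_lt h3)
  nlinarith [this]

lemma bddAbove_rightSlopes (hL : LipschitzWith (Real.toNNReal D0) a) (hD0 : 0 ≤ D0) :
    D0 ∈ upperBounds (insert 0 ((fun θ'' : Icc θl θu => (a θ - a θ'') / ((θ'':ℝ) - θ)) ''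
      {θ'' | (θ:ℝ) < θ''})) := by
  rintro x (rfl | ⟨θ'', hθ'', rfl⟩)
  · exact hD0
  · exact rightSlope_le_D0 hL hD0 hθ''

lemma bddBelow_leftSlopes (hA : Antitone a) (hD0 : 0 ≤ D0) :
    (0:ℝ) ∈ lowerBounds (insert D0 ((fun θ₂ : Icc θl θu => (a θ₂ - a θ) / ((θ:ℝ) - θ₂)) ''
      {θ₂ | (θ₂:ℝ) < θ})) := by
  rintro x (rfl | ⟨θ₂, hθ₂, rfl⟩)
  · exact hD0
  · exact leftSlope_nonneg hA hθ₂

lemma mS_nonneg (hL : LipschitzWith (Real.toNNReal D0) a) (hD0 : 0 ≤ D0) : 0 ≤ mS a θ :=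
  le_csSup ⟨D0, bddAbove_rightSlopes hL hD0⟩ (mem_insert _ _)

lemma mS_le_D0 (hA : Antitone a) (hL : LipschitzWith (Real.toNNReal D0) a) (hD0 : 0 ≤ D0) :
    mS a θ ≤ D0 :=
  csSup_le (insert_nonempty _ _) (bddAbove_rightSlopes hL hD0)

lemma MS_le_D0 (hA : Antitone a) (hD0 : 0 ≤ D0) : MS D0 a θ ≤ D0 :=
  csInf_le ⟨0, bddBelow_leftSlopes hA hD0⟩ (mem_insert _ _)

lemma MS_nonneg (hA : Antitone a) (hD0 : 0 ≤ D0) : 0 ≤ MS D0 a θ :=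
  le_csInf (insert_nonempty _ _) (bddBelow_leftSlopes hA hD0)

lemma rightSlope_le_mS (hL : LipschitzWith (Real.toNNReal D0) a) (hD0 : 0 ≤ D0)
    {θ'' : Icc θl θu} (hlt : (θ:ℝ) < θ'') :
    (a θ - a θ'') / ((θ'':ℝ) - θ) ≤ mS a θ :=
  le_csSup ⟨D0, bddAbove_rightSlopes hL hD0⟩ (mem_insert_of_mem _ ⟨θ'', hlt, rfl⟩)

lemma MS_le_leftSlope (hA : Antitone a) (hD0 : 0 ≤ D0)
    {θ₂ : Icc θl θu} (hlt : (θ₂:ℝ) < θ) :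
    MS D0 a θ ≤ (a θ₂ - a θ) / ((θ:ℝ) - θ₂) :=
  csInf_le ⟨0, bddBelow_leftSlopes hA hD0⟩ (mem_insert_of_mem _ ⟨θ₂, hlt, rfl⟩)

lemma mS_le_MS (hA : Antitone a) (hC : IsConvexMap a)
    (hL : LipschitzWith (Real.toNNReal D0) a) (hD0 : 0 ≤ D0) :
    mS a θ ≤ MS D0 a θ := by
  apply csSup_le (insert_nonempty _ _)
  rintro x (rfl | ⟨θ'', hθ'', rfl⟩)
  · exact MS_nonneg hA hD0
  · apply le_csInf (insert_nonempty _ _)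
    rintro y (rfl | ⟨θ₂, hθ₂, rfl⟩)
    · exact rightSlope_le_D0 hL hD0 hθ''
    · exact rightSlope_ge_leftSlope hC hθ₂ hθ''

/-- Every D in [mS, MS] is a subgradient. -/
lemma Icc_subset_subgradient (hA : Antitone a) (hL : LipschitzWith (Real.toNNReal D0) a)
    (hD0 : 0 ≤ D0) {D : ℝ} (h1 : mS a θ ≤ D) (h2 : D ≤ MS D0 a θ) :
    D ∈ subgradientSet D0 a θ := by
  refine ⟨⟨le_trans (mS_nonneg hL hD0) h1, le_trans h2 (MS_le_D0 hA hD0)⟩, fun θ' => ?_⟩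
  rcases lt_trichotomy (θ:ℝ) (θ':ℝ) with hlt | heq | hgt
  · have := le_trans (rightSlope_le_mS hL hD0 hlt) h1
    rw [div_le_iff₀ (by linarith)] at this
    linarith
  · have : θ = θ' := Subtype.ext heq
    rw [this]; simp [heq]
  · have := le_trans h2 (MS_le_leftSlope hA hD0 hgt)
    rw [le_div_iff₀ (by linarith)] at this
    linarith

/-- Every subgradient is in [mS, MS]. -/
lemma subgradient_subset_Icc (hA : Antitone a) (hL : LipschitzWith (Real.toNNReal D0) a)
    (hD0 : 0 ≤ D0) {D : ℝ} (hD : D ∈ subgradientSet D0 a θ) :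
    mS a θ ≤ D ∧ D ≤ MS D0 a θ := by
  obtain ⟨⟨hD1, hD2⟩, hsub⟩ := hD
  constructor
  · apply csSup_le (insert_nonempty _ _)
    rintro x (rfl | ⟨θ'', hθ'', rfl⟩)
    · exact hD1
    · have hlt : (θ:ℝ) < θ'' := hθ''
      have := hsub θ''
      rw [div_le_iff₀ (by linarith)]
      linarith
  · apply le_csInf (insert_nonempty _ _)
    rintro y (rfl | ⟨θ₂, hθ₂, rfl⟩)
    · exact hD2
    · have hlt : (θ₂:ℝ) < θ := hθ₂
      have := hsub θ₂
      rw [le_div_iff₀ (by linarith)]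
      nlinarith

lemma subgradient_nonempty (hA : Antitone a) (hC : IsConvexMap a)
    (hL : LipschitzWith (Real.toNNReal D0) a) (hD0 : 0 ≤ D0) :
    (subgradientSet D0 a θ).Nonempty :=
  ⟨mS a θ, Icc_subset_subgradient hA hL hD0 le_rfl (mS_le_MS hA hC hL hD0)⟩

lemma subgradient_isCompact : IsCompact (subgradientSet D0 a θ) := by
  apply (isCompact_Icc (a := (0:ℝ)) (b := D0)).of_isClosed_subset
  · have : subgradientSet D0 a θ = (Icc (0:ℝ) D0) ∩
        ⋂ θ' : Icc θl θu, {D : ℝ | a θ - D * ((θ':ℝ) - (θ:ℝ)) ≤ a θ'} := by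
      ext D; simp [subgradientSet, Set.mem_iInter]
    rw [this]
    exact isClosed_Icc.inter (isClosed_iInter fun θ' =>
      isClosed_le (by continuity) continuous_const)
  · exact fun D hD => hD.1

end Helpers2
section Helpers3
variable {θl θu D0 : ℝ} {a : C(Icc θl θu, ℝ)} {θ : Icc θl θu}

lemma mS_def : mS a θ = sSup (insert 0 ((fun θ'' : Icc θl θu =>
    (a θ - a θ'') / ((θ'':ℝ) - θ)) '' {θ'' | (θ:ℝ) < θ''})) := rfl

lemma MS_def : MS D0 a θ = sInf (insert D0 ((fun θ₂ : Icc θl θu =>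
    (a θ₂ - a θ) / ((θ:ℝ) - θ₂)) '' {θ₂ | (θ₂:ℝ) < θ})) := rfl

/-- Approximate subgradients are below `MS + ε` for small perturbations. -/
lemma approx_MS {ε : ℝ} (hε : 0 < ε) :
    ∃ δ > 0, ∀ D' η : ℝ, D' ≤ D0 → 0 ≤ η → η ≤ δ →
      (∀ θ₂ : Icc θl θu, a θ - D' * ((θ₂:ℝ) - θ) - η ≤ a θ₂) →
      D' ≤ MS D0 a θ + ε := by
  have hlt : sInf (insert D0 ((fun θ₂ : Icc θl θu =>
      (a θ₂ - a θ) / ((θ:ℝ) - θ₂)) '' {θ₂ | (θ₂:ℝ) < θ})) < MS D0 a θ + ε/2 := by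
    rw [← MS_def]; linarith
  obtain ⟨x, hx_mem, hx_lt⟩ := exists_lt_of_csInf_lt (insert_nonempty _ _) hlt
  rcases hx_mem with rfl | ⟨θ₂, hθ₂, rfl⟩
  · exact ⟨1, one_pos, fun D' η hD' _ _ _ => by linarith⟩
  · have hθ₂' : (θ₂:ℝ) < θ := hθ₂
    set r : ℝ := (θ:ℝ) - θ₂ with hr_def
    have hr : 0 < r := by simp only [hr_def]; linarith
    refine ⟨r * ε / 2, by positivity, fun D' η _ hη0 hηδ hcon => ?_⟩
    have h1 := hcon θ₂
    have h2 : (a θ₂ - a θ) / ((θ:ℝ) - θ₂) * r = a θ₂ - a θ := by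
      rw [hr_def]; exact div_mul_cancel₀ _ (by linarith)
    have h3 : D' * r ≤ (a θ₂ - a θ) / ((θ:ℝ) - θ₂) * r + r * ε / 2 := by
      rw [h2]; nlinarith
    have h4 : D' ≤ (a θ₂ - a θ) / ((θ:ℝ) - θ₂) + ε / 2 := by nlinarith
    linarith

/-- Approximate subgradients are above `mS - ε` for small perturbations. -/
lemma approx_mS {ε : ℝ} (hε : 0 < ε) :
    ∃ δ > 0, ∀ D' η : ℝ, 0 ≤ D' → 0 ≤ η → η ≤ δ →
      (∀ θ₂ : Icc θl θu, a θ - D' * ((θ₂:ℝ) - θ) - η ≤ a θ₂) →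
      mS a θ - ε ≤ D' := by
  have hlt : mS a θ - ε/2 < sSup (insert 0 ((fun θ'' : Icc θl θu =>
      (a θ - a θ'') / ((θ'':ℝ) - θ)) '' {θ'' | (θ:ℝ) < θ''})) := by
    rw [← mS_def]; linarith
  obtain ⟨x, hx_mem, hx_lt⟩ := exists_lt_of_lt_csSup (insert_nonempty _ _) hlt
  rcases hx_mem with rfl | ⟨θ'', hθ'', rfl⟩
  · exact ⟨1, one_pos, fun D' η hD' _ _ _ => by linarith⟩
  · have hθ''2 : (θ:ℝ) < θ'' := hθ''
    set r : ℝ := (θ'':ℝ) - θ with hr_def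
    have hr : 0 < r := by simp only [hr_def]; linarith
    refine ⟨r * ε / 2, by positivity, fun D' η _ hη0 hηδ hcon => ?_⟩
    have h1 := hcon θ''
    have h2 : (a θ - a θ'') / ((θ'':ℝ) - θ) * r = a θ - a θ'' := by
      rw [hr_def]; exact div_mul_cancel₀ _ (by linarith)
    have h3 : (a θ - a θ'') / ((θ'':ℝ) - θ) * r ≤ D' * r + r * ε / 2 := by
      rw [h2]; nlinarith
    have h4 : (a θ - a θ'') / ((θ'':ℝ) - θ) - ε / 2 ≤ D' := by nlinarith
    linarith

lemma abs_prod_est {s s' d d' δ ε E : ℝ} (h1 : |s' - s| ≤ δ) (h2 : 0 ≤ d') (h3 : d' ≤ E)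
    (h4 : |d' - d| ≤ ε) (h5 : 0 ≤ s) (h6 : s ≤ 1) : |s' * d' - s * d| ≤ E * δ + ε := by
  have he : s' * d' - s * d = (s' - s) * d' + s * (d' - d) := by ring
  rw [he]
  calc |(s' - s) * d' + s * (d' - d)| ≤ |(s' - s) * d'| + |s * (d' - d)| := abs_add_le _ _
    _ = |s' - s| * d' + s * |d' - d| := by
        rw [abs_mul, abs_mul, abs_of_nonneg h2, abs_of_nonneg h5]
    _ ≤ E * δ + ε := by nlinarith [abs_nonneg (s' - s), abs_nonneg (d' - d)]

end Helpers3
theorem insurerReducedPayoff_upperSemicontinuousOn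
    (θl θu : ℝ) (h0l : 0 < θl) (h : θl ≤ θu) (hu1 : θu < 1) (c0 D0 : ℝ) (hD0 : 0 < D0)
    (wbar ℓ : ℝ) (g : ℝ → ℝ) (hg : Continuous g) :
    (∀ a ∈ indirectUtilities θl θu h c0 D0, ∀ θ : Set.Icc θl θu,
      (subgradientSet D0 a θ).Nonempty ∧ IsCompact (subgradientSet D0 a θ) ∧
      ∃ D ∈ subgradientSet D0 a θ,
        (∀ D' ∈ subgradientSet D0 a θ,
          insurerPayoff wbar ℓ g D' a θ ≤ insurerPayoff wbar ℓ g D a θ) ∧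
        insurerReducedPayoff wbar ℓ g D0 a θ = insurerPayoff wbar ℓ g D a θ) ∧
    UpperSemicontinuousOn
      (fun p : C(Set.Icc θl θu, ℝ) × Set.Icc θl θu =>
        insurerReducedPayoff wbar ℓ g D0 p.1 p.2)
      (indirectUtilities θl θu h c0 D0 ×ˢ (Set.univ : Set (Set.Icc θl θu))) := by
  have hD0' : (0:ℝ) ≤ D0 := hD0.le
  have part1 : ∀ a ∈ indirectUtilities θl θu h c0 D0, ∀ θ : Set.Icc θl θu,
      (subgradientSet D0 a θ).Nonempty ∧ IsCompact (subgradientSet D0 a θ) ∧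
      ∃ D ∈ subgradientSet D0 a θ,
        (∀ D' ∈ subgradientSet D0 a θ,
          insurerPayoff wbar ℓ g D' a θ ≤ insurerPayoff wbar ℓ g D a θ) ∧
        insurerReducedPayoff wbar ℓ g D0 a θ = insurerPayoff wbar ℓ g D a θ := by
    rintro a ⟨-, hA, hCx, hL⟩ θ
    have hne : (subgradientSet D0 a θ).Nonempty := subgradient_nonempty hA hCx hL hD0'
    have hcomp : IsCompact (subgradientSet D0 a θ) := subgradient_isCompact
    have hcont : Continuous (fun D => insurerPayoff wbar ℓ g D a θ) := by
      unfold insurerPayoff; fun_prop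
    obtain ⟨D, hDmem, hDmax⟩ := hcomp.exists_isMaxOn hne hcont.continuousOn
    refine ⟨hne, hcomp, D, hDmem, fun D' hD' => hDmax hD', ?_⟩
    exact IsGreatest.csSup_eq ⟨mem_image_of_mem _ hDmem,
      by rintro _ ⟨D', hD', rfl⟩; exact hDmax hD'⟩
  refine ⟨part1, ?_⟩
  rintro ⟨a, θ⟩ ⟨haA, -⟩ y hy
  simp only at hy
  obtain ⟨-, hA, hCx, hL⟩ := id haA
  -- the gap κ
  set uR := insurerReducedPayoff wbar ℓ g D0 a θ with huR
  have hκ : 0 < y - uR := by linarith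
  set κ := y - uR with hκdef
  -- θ is interior to (0,1)
  have hθ0 : 0 < (θ:ℝ) := lt_of_lt_of_le h0l θ.2.1
  have hθ1 : (θ:ℝ) < 1 := lt_of_le_of_lt θ.2.2 hu1
  -- bound for g on a big compact interval
  set RK := ‖a‖ + 1 + D0 with hRKdef
  obtain ⟨B0, hB0⟩ := (isCompact_Icc (a := -RK) (b := RK)).exists_bound_of_continuousOn
    hg.continuousOn
  set B := max B0 0 with hBdef
  have hBnn : (0:ℝ) ≤ B := le_max_right _ _
  have hgB : ∀ x ∈ Icc (-RK) RK, |g x| ≤ B := by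
    intro x hx
    have := hB0 x hx
    rw [Real.norm_eq_abs] at this
    exact le_trans this (le_max_left _ _)
  -- uniform continuity of g on that interval
  have hUC := (isCompact_Icc (a := -RK) (b := RK)).uniformContinuousOn_of_continuous hg.continuousOn
  rw [Metric.uniformContinuousOn_iff] at hUC
  obtain ⟨ηg, hηg, hUC⟩ := hUC (κ/16) (by positivity)
  -- clamp tolerance
  set εc := ηg/2 with hεcdef
  have hεc : 0 < εc := by positivity
  -- approximation radii
  obtain ⟨δM, hδMpos, hMSbound⟩ := approx_MS (D0 := D0) (a := a) (θ := θ) hεc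
  obtain ⟨δm, hδmpos, hmSbound⟩ := approx_mS (a := a) (θ := θ) hεc
  -- perturbation constant
  set Cp := 2 + 2*D0 with hCpdef
  have hCp : (0:ℝ) < Cp := by simp only [hCpdef]; linarith
  have hden : (0:ℝ) < |ℓ| + 2*B + 1 := by nlinarith [abs_nonneg ℓ, hBnn]
  have hden2 : (0:ℝ) < 2*(1+2*D0) := by linarith
  -- the radius δ
  set δ := min (min (δM/Cp) (δm/Cp)) (min (min 1 (εc/(2*(1+2*D0)))) ((κ/8)/(|ℓ| + 2*B + 1)))
    with hδdef
  have hδpos : 0 < δ :=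
    lt_min (lt_min (div_pos hδMpos hCp) (div_pos hδmpos hCp))
      (lt_min (lt_min one_pos (div_pos hεc hden2)) (div_pos (by positivity) hden))
  have hδnn : (0:ℝ) ≤ δ := hδpos.le
  have hδ1 : δ * Cp ≤ δM :=
    (le_div_iff₀ hCp).mp (le_trans (min_le_left _ _) (min_le_left _ _))
  have hδ2 : δ * Cp ≤ δm :=
    (le_div_iff₀ hCp).mp (le_trans (min_le_left _ _) (min_le_right _ _))
  have hδ3 : δ ≤ 1 :=
    le_trans (min_le_right _ _) (le_trans (min_le_left _ _) (min_le_left _ _))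
  have hδ4 : (1+2*D0)*δ + εc < ηg := by
    have h4 : δ ≤ εc/(2*(1+2*D0)) :=
      le_trans (min_le_right _ _) (le_trans (min_le_left _ _) (min_le_right _ _))
    have h5 : δ * (2*(1+2*D0)) ≤ εc := (le_div_iff₀ hden2).mp h4
    have : εc + εc = ηg := by rw [hεcdef]; ring
    nlinarith
  have hδ5 : δ * (|ℓ| + 2*B + 1) ≤ κ/8 := by
    have h4 : δ ≤ (κ/8)/(|ℓ| + 2*B + 1) :=
      le_trans (min_le_right _ _) (min_le_right _ _)
    exact (le_div_iff₀ hden).mp h4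
  -- the eventual statement
  rw [Filter.eventually_iff, Metric.mem_nhdsWithin_iff]
  refine ⟨δ, hδpos, ?_⟩
  rintro ⟨a', θ'⟩ ⟨hball, ha'A, -⟩
  simp only [mem_setOf_eq]
  -- distance facts
  have hd := Metric.mem_ball.mp hball
  rw [Prod.dist_eq] at hd
  have hdista : dist a' a ≤ δ := le_of_lt (lt_of_le_of_lt (le_max_left _ _) hd)
  have hdistθ : dist θ' θ ≤ δ := le_of_lt (lt_of_le_of_lt (le_max_right _ _) hd)
  have hθd : |(θ':ℝ) - θ| ≤ δ := by rwa [Subtype.dist_eq, Real.dist_eq] at hdistθ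
  have hθ'0 : 0 < (θ':ℝ) := lt_of_lt_of_le h0l θ'.2.1
  have hθ'1 : (θ':ℝ) < 1 := lt_of_le_of_lt θ'.2.2 hu1
  obtain ⟨-, hA', hCx', hL'⟩ := id ha'A
  -- the maximizer for (a', θ')
  obtain ⟨-, -, Dm, hDmS, -, heq⟩ := part1 a' ha'A θ'
  rw [heq]
  obtain ⟨⟨hDm0, hDmD0⟩, hDmsub⟩ := hDmS
  -- Dm is an approximate subgradient of a at θ
  have happrox : ∀ θ₂ : Icc θl θu, a θ - Dm * ((θ₂:ℝ) - θ) - Cp*δ ≤ a θ₂ := by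
    intro θ₂
    have h1 := hDmsub θ₂
    have h2 : |a' θ₂ - a θ₂| ≤ δ := by
      have h := ContinuousMap.dist_apply_le_dist (f := a') (g := a) θ₂
      rw [Real.dist_eq] at h; linarith
    have h4 : |a' θ - a θ| ≤ δ := by
      have h := ContinuousMap.dist_apply_le_dist (f := a') (g := a) θ
      rw [Real.dist_eq] at h; linarith
    have h3 : |a' θ' - a' θ| ≤ D0*δ := by
      have h := lip_abs hL' hD0' θ' θ
      have := mul_le_mul_of_nonneg_left hθd hD0'
      linarith
    have h5 : |Dm * ((θ:ℝ) - θ')| ≤ D0*δ := by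
      rw [abs_mul, abs_of_nonneg hDm0, abs_sub_comm]
      exact mul_le_mul hDmD0 hθd (abs_nonneg _) hD0'
    have e6 : Dm * ((θ₂:ℝ) - (θ':ℝ)) = Dm*((θ₂:ℝ) - θ) + Dm*((θ:ℝ) - θ') := by ring
    have e1 := abs_le.mp h2
    have e2 := abs_le.mp h3
    have e3 := abs_le.mp h4
    have e4 := abs_le.mp h5
    simp only [hCpdef]
    linarith [h1, e1.1, e1.2, e2.1, e2.2, e3.1, e3.2, e4.1, e4.2, e6]
  have hCpδnn : 0 ≤ Cp * δ := le_of_lt (mul_pos hCp hδpos)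
  have hCpδ1 : Cp * δ ≤ δM := by rw [mul_comm]; exact hδ1
  have hCpδ2 : Cp * δ ≤ δm := by rw [mul_comm]; exact hδ2
  have hub : Dm ≤ MS D0 a θ + εc := hMSbound Dm (Cp*δ) hDmD0 hCpδnn hCpδ1 happrox
  have hlb : mS a θ - εc ≤ Dm := hmSbound Dm (Cp*δ) hDm0 hCpδnn hCpδ2 happrox
  -- clamp Dm into the subgradient set at (a, θ)
  have hmle : mS a θ ≤ MS D0 a θ := mS_le_MS hA hCx hL hD0'
  set D := max (mS a θ) (min Dm (MS D0 a θ)) with hDdef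
  have hD_mem : D ∈ subgradientSet D0 a θ :=
    Icc_subset_subgradient hA hL hD0' (le_max_left _ _)
      (max_le hmle (min_le_right _ _))
  obtain ⟨⟨hD0m, hDD0⟩, -⟩ := id hD_mem
  have hDbd : |D - Dm| ≤ εc := by
    have h1 : D ≤ Dm + εc :=
      max_le (by linarith) (le_trans (min_le_left _ _) (by linarith))
    have h2 : Dm - εc ≤ D :=
      le_trans (le_min (by linarith) (by linarith)) (le_max_right _ _)
    rw [abs_le]; constructor <;> linarith
  have hDbd' : |Dm - D| ≤ εc := by rwa [abs_sub_comm] at hDbd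
  -- membership in the big interval
  have hnorm : ∀ t : Icc θl θu, |a t| ≤ ‖a‖ := fun t => by
    rw [← Real.norm_eq_abs]; exact a.norm_coe_le_norm t
  have ha'θ' : |a' θ'| ≤ ‖a‖ + 1 := by
    have h2 : |a' θ' - a θ'| ≤ δ := by
      have hh := ContinuousMap.dist_apply_le_dist (f := a') (g := a) θ'
      rw [Real.dist_eq] at hh; linarith
    calc |a' θ'| = |(a' θ' - a θ') + a θ'| := by rw [sub_add_cancel]
      _ ≤ |a' θ' - a θ'| + |a θ'| := abs_add_le _ _
      _ ≤ ‖a‖ + 1 := by linarith [hnorm θ']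
  have memK : ∀ v u2 : ℝ, |v| ≤ ‖a‖ + 1 → |u2| ≤ D0 → v + u2 ∈ Icc (-RK) RK := by
    intro v u2 h1 h2
    have e1 := abs_le.mp h1
    have e2 := abs_le.mp h2
    constructor <;> simp only [hRKdef] <;> linarith
  have hx1'K : a' θ' + (θ':ℝ)*Dm ∈ Icc (-RK) RK := by
    apply memK _ _ ha'θ'
    rw [abs_of_nonneg (mul_nonneg hθ'0.le hDm0)]
    exact le_trans (mul_le_of_le_one_left hDm0 hθ'1.le) hDmD0
  have hx2'K : a' θ' - (1-(θ':ℝ))*Dm ∈ Icc (-RK) RK := by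
    rw [sub_eq_add_neg]
    apply memK _ _ ha'θ'
    rw [abs_neg, abs_of_nonneg (mul_nonneg (by linarith) hDm0)]
    exact le_trans (mul_le_of_le_one_left hDm0 (by linarith)) hDmD0
  have haθ : |a θ| ≤ ‖a‖ + 1 := by linarith [hnorm θ]
  have hx1K : a θ + (θ:ℝ)*D ∈ Icc (-RK) RK := by
    apply memK _ _ haθ
    rw [abs_of_nonneg (mul_nonneg hθ0.le hD0m)]
    exact le_trans (mul_le_of_le_one_left hD0m hθ1.le) hDD0
  have hx2K : a θ - (1-(θ:ℝ))*D ∈ Icc (-RK) RK := by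
    rw [sub_eq_add_neg]
    apply memK _ _ haθ
    rw [abs_neg, abs_of_nonneg (mul_nonneg (by linarith) hD0m)]
    exact le_trans (mul_le_of_le_one_left hD0m (by linarith)) hDD0
  -- closeness of arguments
  have hstep : |a' θ' - a θ| ≤ δ + D0*δ := by
    have h2 : |a' θ' - a θ'| ≤ δ := by
      have hh := ContinuousMap.dist_apply_le_dist (f := a') (g := a) θ'
      rw [Real.dist_eq] at hh; linarith
    have h3 : |a θ' - a θ| ≤ D0*δ := by
      have hh := lip_abs hL hD0' θ' θ
      have := mul_le_mul_of_nonneg_left hθd hD0'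
      linarith
    calc |a' θ' - a θ| = |(a' θ' - a θ') + (a θ' - a θ)| := by rw [sub_add_sub_cancel]
      _ ≤ |a' θ' - a θ'| + |a θ' - a θ| := abs_add_le _ _
      _ ≤ δ + D0*δ := by linarith
  have hprod1 : |(θ':ℝ)*Dm - (θ:ℝ)*D| ≤ D0*δ + εc :=
    abs_prod_est hθd hDm0 hDmD0 hDbd' hθ0.le hθ1.le
  have hprod2 : |(1-(θ':ℝ))*Dm - (1-(θ:ℝ))*D| ≤ D0*δ + εc := by
    apply abs_prod_est _ hDm0 hDmD0 hDbd' (by linarith) (by linarith)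
    rw [show (1-(θ':ℝ)) - (1-(θ:ℝ)) = -((θ':ℝ) - θ) by ring, abs_neg]
    exact hθd
  have hx1diff : dist (a' θ' + (θ':ℝ)*Dm) (a θ + (θ:ℝ)*D) < ηg := by
    rw [Real.dist_eq]
    calc |(a' θ' + (θ':ℝ)*Dm) - (a θ + (θ:ℝ)*D)|
        = |(a' θ' - a θ) + ((θ':ℝ)*Dm - (θ:ℝ)*D)| := by congr 1; ring
      _ ≤ |a' θ' - a θ| + |(θ':ℝ)*Dm - (θ:ℝ)*D| := abs_add_le _ _
      _ < ηg := by linarith [hδ4]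
  have hx2diff : dist (a' θ' - (1-(θ':ℝ))*Dm) (a θ - (1-(θ:ℝ))*D) < ηg := by
    rw [Real.dist_eq]
    calc |(a' θ' - (1-(θ':ℝ))*Dm) - (a θ - (1-(θ:ℝ))*D)|
        = |(a' θ' - a θ) - ((1-(θ':ℝ))*Dm - (1-(θ:ℝ))*D)| := by congr 1; ring
      _ ≤ |a' θ' - a θ| + |(1-(θ':ℝ))*Dm - (1-(θ:ℝ))*D| := abs_sub _ _
      _ < ηg := by linarith [hδ4]
  -- g estimates
  have hgx1 : |g (a' θ' + (θ':ℝ)*Dm) - g (a θ + (θ:ℝ)*D)| ≤ κ/16 := by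
    have := hUC _ hx1'K _ hx1K hx1diff
    rw [Real.dist_eq] at this; linarith
  have hgx2 : |g (a' θ' - (1-(θ':ℝ))*Dm) - g (a θ - (1-(θ:ℝ))*D)| ≤ κ/16 := by
    have := hUC _ hx2'K _ hx2K hx2diff
    rw [Real.dist_eq] at this; linarith
  have hgB1 : |g (a' θ' + (θ':ℝ)*Dm)| ≤ B := hgB _ hx1'K
  have hgB2 : |g (a' θ' - (1-(θ':ℝ))*Dm)| ≤ B := hgB _ hx2'K
  -- main payoff estimate
  have hsum : insurerPayoff wbar ℓ g Dm a' θ' ≤ insurerPayoff wbar ℓ g D a θ + κ/2 := by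
    have e : insurerPayoff wbar ℓ g Dm a' θ' - insurerPayoff wbar ℓ g D a θ
        = -(((θ':ℝ)-θ)*ℓ)
          - (((θ:ℝ)-θ')*(g (a' θ' + (θ':ℝ)*Dm))
            + (1-(θ:ℝ))*(g (a' θ' + (θ':ℝ)*Dm) - g (a θ + (θ:ℝ)*D)))
          - (((θ':ℝ)-θ)*(g (a' θ' - (1-(θ':ℝ))*Dm))
            + (θ:ℝ)*(g (a' θ' - (1-(θ':ℝ))*Dm) - g (a θ - (1-(θ:ℝ))*D))) := by
      simp only [insurerPayoff]; ring
    have p1 : |((θ':ℝ)-θ)*ℓ| ≤ δ*|ℓ| := by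
      rw [abs_mul]; exact mul_le_mul_of_nonneg_right hθd (abs_nonneg _)
    have p2 : |((θ:ℝ)-θ')*(g (a' θ' + (θ':ℝ)*Dm))| ≤ δ*B := by
      rw [abs_mul, abs_sub_comm]; exact mul_le_mul hθd hgB1 (abs_nonneg _) hδnn
    have p3 : |(1-(θ:ℝ))*(g (a' θ' + (θ':ℝ)*Dm) - g (a θ + (θ:ℝ)*D))| ≤ κ/16 := by
      rw [abs_mul, abs_of_nonneg (by linarith : (0:ℝ) ≤ 1 - (θ:ℝ))]
      calc (1-(θ:ℝ)) * |g (a' θ' + (θ':ℝ)*Dm) - g (a θ + (θ:ℝ)*D)|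
          ≤ 1 * |g (a' θ' + (θ':ℝ)*Dm) - g (a θ + (θ:ℝ)*D)| :=
            mul_le_mul_of_nonneg_right (by linarith) (abs_nonneg _)
        _ = |g (a' θ' + (θ':ℝ)*Dm) - g (a θ + (θ:ℝ)*D)| := one_mul _
        _ ≤ κ/16 := hgx1
    have p4 : |((θ':ℝ)-θ)*(g (a' θ' - (1-(θ':ℝ))*Dm))| ≤ δ*B := by
      rw [abs_mul]; exact mul_le_mul hθd hgB2 (abs_nonneg _) hδnn
    have p5 : |(θ:ℝ)*(g (a' θ' - (1-(θ':ℝ))*Dm) - g (a θ - (1-(θ:ℝ))*D))| ≤ κ/16 := by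
      rw [abs_mul, abs_of_nonneg hθ0.le]
      calc (θ:ℝ) * |g (a' θ' - (1-(θ':ℝ))*Dm) - g (a θ - (1-(θ:ℝ))*D)|
          ≤ 1 * |g (a' θ' - (1-(θ':ℝ))*Dm) - g (a θ - (1-(θ:ℝ))*D)| :=
            mul_le_mul_of_nonneg_right (by linarith) (abs_nonneg _)
        _ = |g (a' θ' - (1-(θ':ℝ))*Dm) - g (a θ - (1-(θ:ℝ))*D)| := one_mul _
        _ ≤ κ/16 := hgx2
    have hexp : δ*(|ℓ| + 2*B + 1) = δ*|ℓ| + 2*(δ*B) + δ := by ring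
    have hδκ : δ*|ℓ| + 2*(δ*B) ≤ κ/8 := by linarith [hδ5, hδnn, hexp]
    have q1 := abs_le.mp p1
    have q2 := abs_le.mp p2
    have q3 := abs_le.mp p3
    have q4 := abs_le.mp p4
    have q5 := abs_le.mp p5
    linarith [e, q1.1, q1.2, q2.1, q2.2, q3.1, q3.2, q4.1, q4.2, q5.1, q5.2]
  -- compare with the reduced payoff at (a, θ)
  obtain ⟨-, -, Dmax, hDmaxS, hmax, heq2⟩ := part1 a haA θ
  have hle : insurerPayoff wbar ℓ g D a θ ≤ uR := by
    rw [huR, heq2]; exact hmax D hD_mem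
  linarith
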